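/- Fix a positive integer n and let 𝒫 denote the set of partitions of n, with dominance order ⊴ and transposition λ ↦ λ'. Let R ⊆ 𝒫 be any subset, Ψ : R → 𝒫 a function, and d : 𝒫 × R → ℕ, e : 𝒫 × 𝒫 → ℕ functions satisfying: (i) e(ν,ν) = 1 for all ν ∈ 𝒫; (ii) e(ν,ζ) ≠ 0 implies ζ ⊴ ν; (iii) d(μ,μ) = 1 for all μ ∈ R; (iv) d(λ,μ) ≠ 0 implies λ ⊴ μ; (v) d(λ,μ) = e(λ', Ψ(μ)) for all λ ∈ 𝒫 and μ ∈ R. Then Ψ(μ) = μ' for every μ ∈ R. (This is the combinatorial core of the theorem that the modular Springer correspondence for GL_n sends the simple module D^μ, for μ an ℓ-regular partition, to the nilpotent orbit of Jordan type μ': take d to be the ℓ-modular decomposition matrix of the symmetric group S_n, e the decomposition matrix for GL_n-equivariant perverse sheaves on the nilpotent cone, and Ψ the modular Springer correspondence.) -/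

import Mathlib

/-- A function `f : ℕ → ℕ` (recording the parts `f 0 ≥ f 1 ≥ ⋯`, i.e. `f i` is the
`(i+1)`-st part) is a partition of `n` if it is weakly decreasing, has finite support,
and its parts sum to `n`. -/
def IsPartitionOf (n : ℕ) (f : ℕ → ℕ) : Prop :=
  Antitone f ∧ (Function.support f).Finite ∧ ∑ᶠ i, f i = n

/-- The dominance order on partitions: `DomLE g f` means `g ⊴ f`, i.e. every partial sum
of `g` is at most the corresponding partial sum of `f`. -/
def DomLE (g f : ℕ → ℕ) : Prop :=
  ∀ k : ℕ, ∑ i ∈ Finset.range k, g i ≤ ∑ i ∈ Finset.range k, f i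

/-- The transpose (conjugate) partition: its `(j+1)`-st part is `#{i : λ_i ≥ j+1}`. -/
noncomputable def conjPart (f : ℕ → ℕ) : ℕ → ℕ :=
  fun j => Set.ncard {i : ℕ | j < f i}

lemma exists_bound {f : ℕ → ℕ} (hfin : (Function.support f).Finite) :
    ∃ N, ∀ i, N ≤ i → f i = 0 := by
  obtain ⟨B, hB⟩ := hfin.bddAbove
  refine ⟨B + 1, fun i hi => ?_⟩
  by_contra h
  have : i ∈ Function.support f := h
  have := hB this
  omega

lemma downclosed_eq_range (t : Finset ℕ) (h : ∀ j i, i ∈ t → j ≤ i → j ∈ t) :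
    t = Finset.range t.card := by
  have hsub : t ⊆ Finset.range t.card := by
    intro i hi
    have h1 : Finset.range (i + 1) ⊆ t := fun j hj =>
      h j i hi (Nat.lt_succ_iff.mp (Finset.mem_range.mp hj))
    have := Finset.card_le_card h1
    simp only [Finset.card_range] at this
    exact Finset.mem_range.mpr (by omega)
  exact (Finset.eq_of_subset_of_card_le hsub (by simp))

lemma conjPart_eq_card {f : ℕ → ℕ} {N : ℕ} (hN : ∀ i, N ≤ i → f i = 0) (j : ℕ) :
    conjPart f j = ((Finset.range N).filter (fun i => j < f i)).card := by
  have hset : {i : ℕ | j < f i} = ↑((Finset.range N).filter (fun i => j < f i)) := by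
    ext i
    simp only [Set.mem_setOf_eq, Finset.coe_filter, Finset.mem_range]
    constructor
    · intro h
      refine ⟨?_, h⟩
      by_contra h'
      push_neg at h'
      simp [hN i h'] at h
    · exact fun h => h.2
  rw [conjPart, hset, Set.ncard_coe_finset]

lemma conj_lt_iff {f : ℕ → ℕ} (hf : Antitone f) (hfin : (Function.support f).Finite)
    (i j : ℕ) : j < f i ↔ i < conjPart f j := by
  obtain ⟨N, hN⟩ := exists_bound hfin
  set S := (Finset.range N).filter (fun i => j < f i) with hS
  have hdc : S = Finset.range S.card := by
    apply downclosed_eq_range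
    intro a b hb hab
    simp only [hS, Finset.mem_filter, Finset.mem_range] at hb ⊢
    exact ⟨lt_of_le_of_lt hab hb.1, lt_of_lt_of_le hb.2 (hf hab)⟩
  have hc : conjPart f j = S.card := conjPart_eq_card hN j
  constructor
  · intro h
    have hiN : i < N := by
      by_contra h'
      push_neg at h'
      simp [hN i h'] at h
    have hmem : i ∈ S := by simp [hS, hiN, h]
    rw [hdc, Finset.mem_range] at hmem
    omega
  · intro h
    have hmem : i ∈ S := by rw [hdc, Finset.mem_range]; omega
    simp only [hS, Finset.mem_filter] at hmem
    exact hmem.2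

lemma conjPart_antitone {f : ℕ → ℕ} (hf : Antitone f)
    (hfin : (Function.support f).Finite) : Antitone (conjPart f) := by
  intro j j' hjj'
  by_contra h
  push_neg at h
  have h1 : j' < f (conjPart f j) := (conj_lt_iff hf hfin _ j').mpr h
  have h2 : conjPart f j < conjPart f j :=
    (conj_lt_iff hf hfin _ j).mp (lt_of_le_of_lt hjj' h1)
  omega

lemma conjPart_support_finite {f : ℕ → ℕ} (hf : Antitone f)
    (hfin : (Function.support f).Finite) : (Function.support (conjPart f)).Finite := by
  apply Set.Finite.subset (Set.finite_Iio (f 0))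
  intro j hj
  exact (conj_lt_iff hf hfin 0 j).mpr (Nat.pos_of_ne_zero hj)

lemma conjPart_conjPart {f : ℕ → ℕ} (hf : Antitone f)
    (hfin : (Function.support f).Finite) : conjPart (conjPart f) = f := by
  funext k
  have hset : {j : ℕ | k < conjPart f j} = ↑(Finset.range (f k)) := by
    ext j
    simp only [Set.mem_setOf_eq, Finset.coe_range, Set.mem_Iio]
    exact (conj_lt_iff hf hfin k j).symm
  rw [conjPart, hset, Set.ncard_coe_finset, Finset.card_range]

lemma sum_conjPart_eq {f : ℕ → ℕ} {N : ℕ} (hN : ∀ i, N ≤ i → f i = 0) (k : ℕ) :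
    ∑ j ∈ Finset.range k, conjPart f j = ∑ i ∈ Finset.range N, min (f i) k := by
  have h1 : ∀ j, conjPart f j = ∑ i ∈ Finset.range N, if j < f i then 1 else 0 := by
    intro j
    rw [conjPart_eq_card hN j, Finset.card_filter]
  simp_rw [h1]
  rw [Finset.sum_comm]
  apply Finset.sum_congr rfl
  intro i _
  rw [← Finset.card_filter]
  have : (Finset.range k).filter (fun j => j < f i) = Finset.range (min (f i) k) := by
    ext j
    simp only [Finset.mem_filter, Finset.mem_range, lt_min_iff]
    tauto
  rw [this, Finset.card_range]

lemma sum_eq_n {n : ℕ} {f : ℕ → ℕ} {N : ℕ} (hf : IsPartitionOf n f)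
    (hN : ∀ i, N ≤ i → f i = 0) : ∑ i ∈ Finset.range N, f i = n := by
  rw [← hf.2.2]
  refine (finsum_eq_finset_sum_of_support_subset f ?_).symm
  intro i hi
  simp only [Finset.coe_range, Set.mem_Iio]
  by_contra h'
  push_neg at h'
  exact hi (hN i h')

lemma conjPart_isPartitionOf {n : ℕ} {f : ℕ → ℕ} (hf : IsPartitionOf n f) :
    IsPartitionOf n (conjPart f) := by
  obtain ⟨hanti, hfin, hsum⟩ := hf
  refine ⟨conjPart_antitone hanti hfin, conjPart_support_finite hanti hfin, ?_⟩
  obtain ⟨N, hN⟩ := exists_bound hfin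
  have hbd : ∀ j, f 0 ≤ j → conjPart f j = 0 := by
    intro j hj
    by_contra h
    have := (conj_lt_iff hanti hfin 0 j).mpr (Nat.pos_of_ne_zero h)
    omega
  rw [finsum_eq_finset_sum_of_support_subset (conjPart f) (s := Finset.range (f 0)) ?side]
  case side =>
    intro j hj
    simp only [Finset.coe_range, Set.mem_Iio]
    by_contra h'
    push_neg at h'
    exact hj (hbd j h')
  rw [sum_conjPart_eq hN (f 0)]
  have hmin : ∀ i ∈ Finset.range N, min (f i) (f 0) = f i := fun i _ =>
    min_eq_left (hanti (Nat.zero_le i))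
  rw [Finset.sum_congr rfl hmin]
  exact sum_eq_n ⟨hanti, hfin, hsum⟩ hN

lemma domLE_antisymm {f g : ℕ → ℕ} (h1 : DomLE g f) (h2 : DomLE f g) : g = f := by
  funext k
  have e1 := le_antisymm (h1 k) (h2 k)
  have e2 := le_antisymm (h1 (k + 1)) (h2 (k + 1))
  rw [Finset.sum_range_succ, Finset.sum_range_succ] at e2
  omega

lemma domLE_conj {n : ℕ} {f g : ℕ → ℕ} (hf : IsPartitionOf n f) (hg : IsPartitionOf n g)
    (h : DomLE g f) : DomLE (conjPart f) (conjPart g) := by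
  intro k
  obtain ⟨Nf, hNf⟩ := exists_bound hf.2.1
  obtain ⟨Ng, hNg⟩ := exists_bound hg.2.1
  set N := max Nf Ng with hNdef
  have hNf' : ∀ i, N ≤ i → f i = 0 := fun i hi => hNf i (le_trans (le_max_left _ _) hi)
  have hNg' : ∀ i, N ≤ i → g i = 0 := fun i hi => hNg i (le_trans (le_max_right _ _) hi)
  rw [sum_conjPart_eq hNf' k, sum_conjPart_eq hNg' k]
  -- T f + U f = n, T g + U g = n, suffices U g ≤ U f
  have hTU : ∀ (h : ℕ → ℕ), (∀ i, N ≤ i → h i = 0) → IsPartitionOf n h →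
      (∑ i ∈ Finset.range N, min (h i) k) + (∑ i ∈ Finset.range N, (h i - k)) = n := by
    intro h hNh hP
    rw [← Finset.sum_add_distrib]
    rw [Finset.sum_congr rfl (fun i _ => by omega : ∀ i ∈ Finset.range N,
      min (h i) k + (h i - k) = h i)]
    exact sum_eq_n hP hNh
  have hTf := hTU f hNf' hf
  have hTg := hTU g hNg' hg
  suffices hU : (∑ i ∈ Finset.range N, (g i - k)) ≤ ∑ i ∈ Finset.range N, (f i - k) by omega
  -- reduce to range s where s counts parts of g bigger than k
  set S := (Finset.range N).filter (fun i => k < g i) with hSdef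
  have hdc : S = Finset.range S.card := by
    apply downclosed_eq_range
    intro a b hb hab
    simp only [hSdef, Finset.mem_filter, Finset.mem_range] at hb ⊢
    exact ⟨lt_of_le_of_lt hab hb.1, lt_of_lt_of_le hb.2 (hg.1 hab)⟩
  set s := S.card with hsdef
  have hsN : s ≤ N := by
    have : S ⊆ Finset.range N := Finset.filter_subset _ _
    simpa using Finset.card_le_card this
  have hgk : ∀ i, i < s → k < g i := by
    intro i hi
    have : i ∈ S := by rw [hdc, Finset.mem_range]; exact hi
    simp only [hSdef, Finset.mem_filter] at this
    exact this.2
  have hgk' : ∀ i, s ≤ i → i < N → g i ≤ k := by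
    intro i hsi hiN
    by_contra h'
    push_neg at h'
    have : i ∈ S := by simp [hSdef, hiN, h']
    rw [hdc, Finset.mem_range] at this
    omega
  have step1 : (∑ i ∈ Finset.range N, (g i - k)) = ∑ i ∈ Finset.range s, (g i - k) := by
    symm
    apply Finset.sum_subset (Finset.range_subset_range.mpr hsN)
    intro i hiN hns
    simp only [Finset.mem_range] at hiN hns
    have := hgk' i (by omega) hiN
    omega
  have hconst : s * k = ∑ _i ∈ Finset.range s, k := by
    simp [Finset.sum_const, mul_comm]
  have step2 : (∑ i ∈ Finset.range s, (g i - k)) + s * k = ∑ i ∈ Finset.range s, g i := by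
    rw [hconst, ← Finset.sum_add_distrib]
    apply Finset.sum_congr rfl
    intro i hi
    have := hgk i (Finset.mem_range.mp hi)
    omega
  have step3 : (∑ i ∈ Finset.range s, g i) ≤ ∑ i ∈ Finset.range s, f i := h s
  have step4 : (∑ i ∈ Finset.range s, f i) ≤ (∑ i ∈ Finset.range s, (f i - k)) + s * k := by
    rw [hconst, ← Finset.sum_add_distrib]
    apply Finset.sum_le_sum
    intro i _
    omega
  have step5 : (∑ i ∈ Finset.range s, (f i - k)) ≤ ∑ i ∈ Finset.range N, (f i - k) :=
    Finset.sum_le_sum_of_subset (Finset.range_subset_range.mpr hsN)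
  omega


/-- **Combinatorial core of the modular Springer correspondence for `GL_n`.**
Let `𝒫` be the partitions of a positive integer `n`, `R ⊆ 𝒫`, `Ψ : R → 𝒫`, and let
`d : 𝒫 × R → ℕ` and `e : 𝒫 × 𝒫 → ℕ` satisfy:
(i) `e ν ν = 1`; (ii) `e ν ζ ≠ 0 → ζ ⊴ ν`; (iii) `d μ μ = 1` for `μ ∈ R`;
(iv) `d λ μ ≠ 0 → λ ⊴ μ`; (v) `d λ μ = e λ' (Ψ μ)`.
Then `Ψ μ = μ'` for every `μ ∈ R`. -/
theorem springer_correspondence_GLn_combinatorial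
    (n : ℕ) (hn : 0 < n)
    (R : Set (ℕ → ℕ)) (hR : ∀ μ ∈ R, IsPartitionOf n μ)
    (Ψ : (ℕ → ℕ) → (ℕ → ℕ)) (hΨ : ∀ μ ∈ R, IsPartitionOf n (Ψ μ))
    (d e : (ℕ → ℕ) → (ℕ → ℕ) → ℕ)
    (he1 : ∀ ν : ℕ → ℕ, IsPartitionOf n ν → e ν ν = 1)
    (he2 : ∀ ν ζ : ℕ → ℕ, IsPartitionOf n ν → IsPartitionOf n ζ →
      e ν ζ ≠ 0 → DomLE ζ ν)
    (hd1 : ∀ μ ∈ R, d μ μ = 1)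
    (hd2 : ∀ lam : ℕ → ℕ, IsPartitionOf n lam → ∀ μ ∈ R, d lam μ ≠ 0 → DomLE lam μ)
    (hde : ∀ lam : ℕ → ℕ, IsPartitionOf n lam → ∀ μ ∈ R,
      d lam μ = e (conjPart lam) (Ψ μ)) :
    ∀ μ ∈ R, Ψ μ = conjPart μ := by
  intro μ hμ
  have hμP := hR μ hμ
  have hΨP := hΨ μ hμ
  have hμc := conjPart_isPartitionOf hμP
  have hΨc := conjPart_isPartitionOf hΨP
  have h1 : DomLE (Ψ μ) (conjPart μ) := by
    apply he2 _ _ hμc hΨP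
    rw [← hde μ hμP μ hμ, hd1 μ hμ]
    exact one_ne_zero
  have h2 : DomLE (conjPart (Ψ μ)) μ := by
    apply hd2 _ hΨc μ hμ
    rw [hde _ hΨc μ hμ, conjPart_conjPart hΨP.1 hΨP.2.1, he1 _ hΨP]
    exact one_ne_zero
  have h3 : DomLE (conjPart μ) (conjPart (conjPart (Ψ μ))) := domLE_conj hμP hΨc h2
  rw [conjPart_conjPart hΨP.1 hΨP.2.1] at h3
  exact domLE_antisymm h1 h3
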